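/- Let k be a perfect field of characteristic p > 0 and V a k-vector space. Let σ act on V^{⊗p} by cyclic permutation of the tensor factors, and set d_− = id − σ and d_+ = id + σ + ⋯ + σ^{p−1} on V^{⊗p}. Then the map φ: V → V^{⊗p}, φ(v) = v⊗v⊗⋯⊗v, takes values in ker d_− ∩ ker d_+, and the induced maps V → ker d_−/im d_+ and V → ker d_+/im d_− are additive, satisfy φ(λv) = λ^p φ(v) for λ ∈ k, and are bijective; that is, φ induces an isomorphism of the Frobenius twist V^{(1)} with the Tate homology Ȟ_i(ℤ/pℤ, V^{⊗p}) in every (odd and even) degree i. -/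

import Mathlib

/-!
STATEMENT 9. Let `k` be a perfect field of characteristic `p > 0` and `V` a `k`-vector
space.  Let `σ` act on `V^{⊗ p}` by cyclic permutation of the tensor factors, and set
`d₋ = id − σ`, `d₊ = id + σ + ⋯ + σ^{p−1}`.  Then `φ : V → V^{⊗ p}`, `φ(v) = v ⊗ ⋯ ⊗ v`,
takes values in `ker d₋ ∩ ker d₊`; the induced maps `V → ker d₋ / im d₊` and
`V → ker d₊ / im d₋` are additive, satisfy `φ(λ v) = λ^p φ(v)`, and are bijective;
i.e. `φ` induces an isomorphism of the Frobenius twist `V^{(1)}` with the Tate homology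
`Ȟ_i(ℤ/pℤ, V^{⊗ p})` in every degree.
-/

open scoped TensorProduct
open PiTensorProduct

noncomputable section

variable (k : Type) [Field k] (p : ℕ) [CharP k p] [PerfectField k]
variable (V : Type) [AddCommGroup V] [Module k V]

/-- The `p`-th tensor power `V^{⊗ p}` over `k`. -/
abbrev TPow : Type := ⨂[k] (_ : Fin p), V

/-- The cyclic permutation `σ` of the tensor factors of `V^{⊗ p}`. -/
def sigma : TPow k p V →ₗ[k] TPow k p V :=
  (PiTensorProduct.reindex k (fun _ : Fin p => V) (finRotate p)).toLinearMap

/-- `d₋ = id − σ`. -/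
def dMinus : TPow k p V →ₗ[k] TPow k p V := LinearMap.id - sigma k p V

/-- `d₊ = id + σ + ⋯ + σ^{p−1}`. -/
def dPlus : TPow k p V →ₗ[k] TPow k p V :=
  ∑ i ∈ Finset.range p, (sigma k p V) ^ i

/-- The (non-additive) `p`-th power map `φ(v) = v ⊗ v ⊗ ⋯ ⊗ v`. -/
def phi (v : V) : TPow k p V := PiTensorProduct.tprod k (fun _ : Fin p => v)

end

/- ### Auxiliary development (combinatorics of the cyclic shift and the
   Finsupp coordinate model) ### -/


namespace TateAux

open Equiv Finset

open Fin.NatCast in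
lemma rot_pow_apply {n : ℕ} (t : ℕ) (j : Fin (n+1)) :
    ((finRotate (n+1))^t) j = j + (t : Fin (n+1)) := by
  induction t with
  | zero => simp
  | succ t ih =>
    rw [pow_succ', Equiv.Perm.mul_apply, ih, finRotate_succ_apply]
    push_cast
    abel

lemma rot_pow_self {n : ℕ} [NeZero n] : (finRotate n)^n = 1 := by
  obtain ⟨m, rfl⟩ := Nat.exists_eq_succ_of_ne_zero (NeZero.ne n)
  ext j
  rw [rot_pow_apply]
  simp [Fin.natCast_self]

variable (p : ℕ) (ι : Type)

/-- the shift permutation on `Fin p → ι`. -/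
def sE : Equiv.Perm (Fin p → ι) := Equiv.arrowCongr (finRotate p) (Equiv.refl ι)

variable {p ι}

lemma sE_apply (f : Fin p → ι) : sE p ι f = f ∘ ⇑(finRotate p).symm := by
  funext j; simp [sE]

lemma sE_pow_apply (t : ℕ) (f : Fin p → ι) :
    ((sE p ι)^t) f = f ∘ ⇑((finRotate p ^ t)⁻¹) := by
  induction t with
  | zero => simp
  | succ t ih =>
    rw [pow_succ', Equiv.Perm.mul_apply, ih]
    funext j
    rw [pow_succ', mul_inv_rev]
    simp [sE, Equiv.Perm.inv_def]

lemma sE_pow_self [NeZero p] : (sE p ι)^p = 1 := by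
  ext f
  rw [sE_pow_apply, rot_pow_self]
  simp

lemma sE_const (t : ι) : sE p ι (Function.const _ t) = Function.const _ t := rfl

lemma fix_eq_const [NeZero p] {f : Fin p → ι} (h : sE p ι f = f) :
    f = Function.const _ (f 0) := by
  have key : ∀ j : Fin p, f ((finRotate p) j) = f j := by
    intro j
    have h' := congrFun h ((finRotate p) j)
    rw [sE_apply] at h'
    simpa using h'.symm
  have key2 : ∀ (t : ℕ), f (((finRotate p)^t) 0) = f 0 := by
    intro t
    induction t with
    | zero => rfl
    | succ t ih => rw [pow_succ', Equiv.Perm.mul_apply, key, ih]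
  funext j
  obtain ⟨m, hm⟩ := Nat.exists_eq_succ_of_ne_zero (NeZero.ne p)
  subst hm
  have := key2 j.val
  rwa [rot_pow_apply, zero_add, Fin.cast_val_eq_self] at this

lemma nonfix_pow {f : Fin p → ι} (h : sE p ι f ≠ f) (i : ℕ) :
    sE p ι ((sE p ι ^ i) f) ≠ (sE p ι ^ i) f := by
  intro hc
  apply h
  have h1 : (sE p ι ^ (i+1)) f = (sE p ι ^ i) f := by
    rw [pow_succ', Equiv.Perm.mul_apply]
    exact hc
  have h2 : (sE p ι ^ i) (sE p ι f) = (sE p ι ^ i) f := by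
    rw [← Equiv.Perm.mul_apply, ← pow_succ]
    exact h1
  exact Equiv.injective _ h2

lemma nonfix_orbit_inj (hp : p.Prime) {f : Fin p → ι} (h : sE p ι f ≠ f)
    {i j : ℕ} (hi : i < p) (hj : j < p) (hij : (sE p ι ^ i) f = (sE p ι ^ j) f) : i = j := by
  haveI : NeZero p := ⟨hp.ne_zero⟩
  suffices H : ∀ i j : ℕ, i < p → j < p → i ≤ j → (sE p ι ^ i) f = (sE p ι ^ j) f → i = j by
    rcases le_total i j with hle | hle
    · exact H i j hi hj hle hij
    · exact (H j i hj hi hle hij.symm).symm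
  clear hi hj hij
  intro i j hi hj hle hij
  by_contra hne
  have hd : 0 < j - i := by omega
  set d := j - i with hdd
  have hdp : d < p := by omega
  have hfix : (sE p ι ^ d) f = f := by
    have : (sE p ι ^ i) ((sE p ι ^ d) f) = (sE p ι ^ i) f := by
      rw [← Equiv.Perm.mul_apply, ← pow_add]
      have hid : i + d = j := by omega
      rw [hid, ← hij]
    exact Equiv.injective _ this
  have hmulfix : ∀ u : ℕ, (sE p ι ^ (d * u)) f = f := by
    intro u
    induction u with
    | zero => simp
    | succ u ih =>
      rw [Nat.mul_succ, pow_add, Equiv.Perm.mul_apply, hfix, ih]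
  have hcop : Nat.Coprime d p :=
    ((Nat.Prime.coprime_iff_not_dvd hp).mpr (Nat.not_dvd_of_pos_of_lt hd hdp)).symm
  obtain ⟨u, -, hu⟩ := Nat.exists_mul_mod_eq_one_of_coprime hcop hp.one_lt
  have hq : d * u = p * (d * u / p) + 1 := by
    conv_lhs => rw [← Nat.div_add_mod (d * u) p]
    rw [hu]
  apply h
  have : (sE p ι ^ (d * u)) f = sE p ι f := by
    rw [hq, pow_add, pow_mul, sE_pow_self]
    simp
  rw [hmulfix u] at this
  exact this.symm

end TateAux

section devB
namespace TateAux

open Finset Finsupp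

section ringlemmas

variable {k : Type} [Field k] {M : Type} [AddCommGroup M] [Module k M]

lemma ring_shift {T : M →ₗ[k] M} {n : ℕ} (hn : n ≠ 0) (hx : T^n = 1) :
    ∑ i ∈ Finset.range n, T^(i+1) = ∑ i ∈ Finset.range n, T^i := by
  obtain ⟨m, rfl⟩ : ∃ m, n = m + 1 := ⟨n - 1, by omega⟩
  rw [Finset.sum_range_succ (fun i => T^(i+1)) m, Finset.sum_range_succ' (fun i => T^i) m,
    hx, pow_zero]

lemma comp_geom {T : M →ₗ[k] M} {n : ℕ} (hn : n ≠ 0) (hx : T^n = 1) :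
    T ∘ₗ (∑ i ∈ Finset.range n, T^i) = ∑ i ∈ Finset.range n, T^i := by
  rw [← Module.End.mul_eq_comp, Finset.mul_sum]
  simp only [← pow_succ']
  exact ring_shift hn hx

lemma geom_comp {T : M →ₗ[k] M} {n : ℕ} (hn : n ≠ 0) (hx : T^n = 1) :
    (∑ i ∈ Finset.range n, T^i) ∘ₗ T = ∑ i ∈ Finset.range n, T^i := by
  rw [← Module.End.mul_eq_comp, Finset.sum_mul]
  simp only [← pow_succ]
  exact ring_shift hn hx

lemma dm_comp_dp {T : M →ₗ[k] M} {n : ℕ} (hn : n ≠ 0) (hx : T^n = 1) :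
    (LinearMap.id - T) ∘ₗ (∑ i ∈ Finset.range n, T^i) = 0 := by
  rw [LinearMap.sub_comp, LinearMap.id_comp, comp_geom hn hx, sub_self]

lemma dp_comp_dm {T : M →ₗ[k] M} {n : ℕ} (hn : n ≠ 0) (hx : T^n = 1) :
    (∑ i ∈ Finset.range n, T^i) ∘ₗ (LinearMap.id - T) = 0 := by
  rw [LinearMap.comp_sub, LinearMap.comp_id, geom_comp hn hx, sub_self]

lemma dm_comp_c {T : M →ₗ[k] M} {n : ℕ} (hn : n ≠ 0) (hx : T^n = 1)
    (hc : ((n : ℕ) : k) = 0) :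
    (LinearMap.id - T) ∘ₗ (∑ i ∈ Finset.range n, (i : k) • T^i) = ∑ i ∈ Finset.range n, T^i := by
  obtain ⟨m, rfl⟩ : ∃ m, n = m + 1 := ⟨n - 1, by omega⟩
  rw [LinearMap.sub_comp, LinearMap.id_comp, ← Module.End.mul_eq_comp, Finset.mul_sum]
  have step : ∀ i : ℕ, T * ((i:k) • T^i) = (i:k) • T^(i+1) := fun i => by
    rw [mul_smul_comm, ← pow_succ']
  simp only [step]
  rw [Finset.sum_range_succ' (fun i : ℕ => (i:k) • T^i) m,
      Finset.sum_range_succ (fun i : ℕ => (i:k) • T^(i+1)) m, hx]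
  have hcast : ((m : ℕ) : k) = -1 := by
    push_cast at hc
    exact eq_neg_of_add_eq_zero_left hc
  rw [hcast, Finset.sum_range_succ' (fun i => T^i) m]
  push_cast
  simp only [pow_zero, Nat.cast_zero, zero_smul, add_zero, neg_smul, one_smul, smul_eq_mul,
    mul_one]
  have hsum : ∑ i ∈ Finset.range m, ((i:k)+1) • T^(i+1)
      = ∑ i ∈ Finset.range m, (i:k) • T^(i+1) + ∑ i ∈ Finset.range m, T^(i+1) := by
    rw [← Finset.sum_add_distrib]
    refine Finset.sum_congr rfl fun i _ => ?_
    rw [add_smul, one_smul]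
  rw [hsum]
  abel

end ringlemmas

variable (k : Type) [Field k] (p : ℕ) (ι : Type)

abbrev Wmod : Type := (Fin p → ι) →₀ k

/-- The shift operator on the coordinate module. -/
noncomputable def S : Wmod k p ι →ₗ[k] Wmod k p ι := (Finsupp.domLCongr (sE p ι)).toLinearMap

variable {k p ι}

lemma S_apply (y : Wmod k p ι) (g : Fin p → ι) : S k p ι y g = y ((sE p ι).symm g) := by
  simp [S, Finsupp.domLCongr_apply, Finsupp.domCongr_apply, Finsupp.equivMapDomain_apply]

lemma S_single (f : Fin p → ι) (c : k) :
    S k p ι (Finsupp.single f c) = Finsupp.single (sE p ι f) c := by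
  simp [S, Finsupp.domLCongr_apply, Finsupp.domCongr_apply, Finsupp.equivMapDomain_single]

lemma Spow_single (t : ℕ) (f : Fin p → ι) (c : k) :
    ((S k p ι)^t) (Finsupp.single f c) = Finsupp.single ((sE p ι ^ t) f) c := by
  induction t with
  | zero => simp
  | succ t ih =>
    rw [pow_succ', Module.End.mul_apply, ih, S_single, ← Equiv.Perm.mul_apply, ← pow_succ']

lemma Spow_apply (t : ℕ) (y : Wmod k p ι) (g : Fin p → ι) :
    ((S k p ι)^t) y g = y (((sE p ι)^t)⁻¹ g) := by
  induction t generalizing y g with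
  | zero => simp
  | succ t ih =>
    have h1 : ((sE p ι)^(t+1))⁻¹ g = ((sE p ι)^t)⁻¹ ((sE p ι).symm g) := by
      rw [pow_succ', mul_inv_rev, Equiv.Perm.mul_apply]
      rfl
    rw [h1, pow_succ', Module.End.mul_apply, S_apply, ih]

lemma S_pow_self [NeZero p] : (S k p ι)^p = 1 := by
  apply Finsupp.lhom_ext
  intro f c
  rw [Spow_single, sE_pow_self]
  simp [Module.End.one_eq_id]

variable (k p ι)

noncomputable def DM : Wmod k p ι →ₗ[k] Wmod k p ι := LinearMap.id - S k p ι

noncomputable def DP : Wmod k p ι →ₗ[k] Wmod k p ι := ∑ i ∈ Finset.range p, (S k p ι)^i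

variable {k p ι}

lemma S_comp_DP [NeZero p] : S k p ι ∘ₗ DP k p ι = DP k p ι := by
  rw [DP]; exact comp_geom (NeZero.ne p) S_pow_self

lemma DM_comp_DP [NeZero p] : DM k p ι ∘ₗ DP k p ι = 0 := by
  rw [DP, DM]; exact dm_comp_dp (NeZero.ne p) S_pow_self

lemma DP_comp_DM [NeZero p] : DP k p ι ∘ₗ DM k p ι = 0 := by
  rw [DP, DM]; exact dp_comp_dm (NeZero.ne p) S_pow_self

lemma range_DP_le [NeZero p] [CharP k p] :
    LinearMap.range (DP k p ι) ≤ LinearMap.range (DM k p ι) := by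
  rintro x ⟨y, rfl⟩
  refine ⟨(∑ i ∈ Finset.range p, (i : k) • (S k p ι)^i) y, ?_⟩
  have h := dm_comp_c (T := S k p ι) (NeZero.ne p) S_pow_self (CharP.cast_eq_zero k p)
  have h' := congrArg (fun (L : Wmod k p ι →ₗ[k] Wmod k p ι) => L y) h
  simp only [LinearMap.comp_apply] at h'
  rw [DM, DP]
  exact h'

end TateAux
end devB

section devC
namespace TateAux

open Finset Finsupp

variable {k : Type} [Field k] {p : ℕ} {ι : Type}

lemma fix_pow {g : Fin p → ι} (hg : sE p ι g = g) (t : ℕ) : (sE p ι ^ t) g = g := by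
  induction t with
  | zero => rfl
  | succ t ih => rw [pow_succ', Equiv.Perm.mul_apply, ih, hg]

lemma fix_inv_pow {g : Fin p → ι} (hg : sE p ι g = g) (t : ℕ) : ((sE p ι ^ t))⁻¹ g = g := by
  conv_lhs => rw [← fix_pow hg t]
  exact (sE p ι ^ t).symm_apply_apply g

lemma Spow_apply_fix {g : Fin p → ι} (hg : sE p ι g = g) (t : ℕ) (y : Wmod k p ι) :
    ((S k p ι)^t) y g = y g := by
  rw [Spow_apply, fix_inv_pow hg]

lemma DP_apply (y : Wmod k p ι) (g : Fin p → ι) :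
    DP k p ι y g = ∑ i ∈ Finset.range p, ((S k p ι)^i) y g := by
  rw [DP, LinearMap.sum_apply, Finsupp.finset_sum_apply]

lemma DP_apply_fix [CharP k p] {g : Fin p → ι} (hg : sE p ι g = g) (y : Wmod k p ι) :
    DP k p ι y g = 0 := by
  rw [DP_apply]
  have : ∀ i ∈ Finset.range p, ((S k p ι)^i) y g = y g := fun i _ => Spow_apply_fix hg i y
  rw [Finset.sum_congr rfl this, Finset.sum_const, Finset.card_range, nsmul_eq_mul]
  rw [CharP.cast_eq_zero k p, zero_mul]

lemma DM_apply_fix {g : Fin p → ι} (hg : sE p ι g = g) (y : Wmod k p ι) :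
    DM k p ι y g = 0 := by
  rw [DM, LinearMap.sub_apply, Finsupp.sub_apply, LinearMap.id_apply, S_apply]
  have h1 : (sE p ι).symm g = g := by rw [Equiv.symm_apply_eq, hg]
  rw [h1, sub_self]

lemma inv_apply_shift {y : Wmod k p ι} (h : S k p ι y = y) (g : Fin p → ι) :
    y (sE p ι g) = y g := by
  have h' : y ((sE p ι).symm (sE p ι g)) = y (sE p ι g) := by
    conv_rhs => rw [← h]
    rw [S_apply]
  rw [Equiv.symm_apply_apply] at h'
  exact h'.symm

lemma inv_apply_pow {y : Wmod k p ι} (h : S k p ι y = y) (t : ℕ) (f : Fin p → ι) :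
    y ((sE p ι ^ t) f) = y f := by
  induction t with
  | zero => rfl
  | succ t ih => rw [pow_succ', Equiv.Perm.mul_apply, inv_apply_shift h, ih]

lemma orbit_sum [NeZero p] {y : Wmod k p ι} (h : DP k p ι y = 0) (f : Fin p → ι) :
    ∑ i ∈ Finset.range p, y ((sE p ι ^ i) f) = 0 := by
  have h0 : ∑ i ∈ Finset.range p, y (((sE p ι)^i)⁻¹ f) = 0 := by
    have := congrArg (fun z : Wmod k p ι => z f) h
    simp only [Finsupp.coe_zero, Pi.zero_apply] at this
    rw [DP_apply] at this
    simpa only [Spow_apply] using this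
  have hconv : ∀ i ∈ Finset.range p, y (((sE p ι)^i)⁻¹ f) = y ((sE p ι ^ (p - i)) f) := by
    intro i hi
    congr 1
    rw [Equiv.Perm.inv_def, Equiv.symm_apply_eq, ← Equiv.Perm.mul_apply, ← pow_add]
    have : i + (p - i) = p := by
      have := Finset.mem_range.mp hi
      omega
    rw [this, sE_pow_self]
    rfl
  rw [Finset.sum_congr rfl hconv] at h0
  obtain ⟨m, hm⟩ : ∃ m, p = m + 1 := ⟨p - 1, by have := NeZero.ne p; omega⟩
  set F : ℕ → k := fun t => y ((sE p ι ^ t) f) with hF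
  have hFp : F p = F 0 := by
    simp only [hF, sE_pow_self, pow_zero, Equiv.Perm.one_apply, Equiv.Perm.coe_one, id_eq]
  calc ∑ i ∈ Finset.range p, F i
      = ∑ i ∈ Finset.range p, F (p - i) := by
        rw [hm, Finset.sum_range_succ' F m, Finset.sum_range_succ' (fun i => F (m + 1 - i)) m]
        have hr : ∑ i ∈ Finset.range m, F (m + 1 - (i+1)) = ∑ i ∈ Finset.range m, F (i+1) := by
          have := Finset.sum_range_reflect (fun j => F (j+1)) m
          calc ∑ i ∈ Finset.range m, F (m + 1 - (i+1))
              = ∑ i ∈ Finset.range m, F (m - 1 - i + 1) := by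
                refine Finset.sum_congr rfl fun i hi => ?_
                congr 1
                have := Finset.mem_range.mp hi
                omega
            _ = ∑ i ∈ Finset.range m, F (i+1) := this
        rw [hr]
        congr 1
        rw [Nat.sub_zero, ← hm, hFp]
      _ = 0 := h0

end TateAux
end devC

section devD
namespace TateAux

open Finset Finsupp

variable {k : Type} [Field k] {p : ℕ} {ι : Type}

/-- Orbit element with coefficients. -/
noncomputable def orb (f : Fin p → ι) (cc : ℕ → k) : Wmod k p ι :=
  ∑ i ∈ Finset.range p, Finsupp.single ((sE p ι ^ i) f) (cc i)

lemma orb_apply_mem (hp : p.Prime) {f : Fin p → ι} (hfix : sE p ι f ≠ f) (cc : ℕ → k)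
    {i : ℕ} (hi : i < p) : orb f cc ((sE p ι ^ i) f) = cc i := by
  classical
  rw [orb, Finsupp.finset_sum_apply]
  rw [Finset.sum_eq_single_of_mem i (Finset.mem_range.mpr hi)]
  · rw [Finsupp.single_eq_same]
  · intro j hj hne
    exact Finsupp.single_eq_of_ne' fun hc =>
      hne (nonfix_orbit_inj hp hfix (Finset.mem_range.mp hj) hi hc)

lemma orb_apply_notmem {f : Fin p → ι} (cc : ℕ → k) {g : Fin p → ι}
    (hg : ∀ i, i < p → g ≠ (sE p ι ^ i) f) : orb f cc g = 0 := by
  classical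
  rw [orb, Finsupp.finset_sum_apply]
  refine Finset.sum_eq_zero fun j hj => ?_
  exact Finsupp.single_eq_of_ne' fun hc => hg j (Finset.mem_range.mp hj) hc.symm

lemma orb_apply_fix {f : Fin p → ι} (hfix : sE p ι f ≠ f) (cc : ℕ → k) {g : Fin p → ι}
    (hg : sE p ι g = g) : orb f cc g = 0 := by
  refine orb_apply_notmem cc fun i hi hc => ?_
  exact nonfix_pow hfix i (by rw [← hc, hg])

/-- even key lemma: invariant elements vanishing at fixed points are in the image of `DP`. -/
lemma KL1 [NeZero p] [CharP k p] (hp : p.Prime) :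
    ∀ (n : ℕ) (y : Wmod k p ι), y.support.card ≤ n → S k p ι y = y →
      (∀ g, sE p ι g = g → y g = 0) → y ∈ LinearMap.range (DP k p ι) := by
  intro n
  induction n with
  | zero =>
    intro y hcard _ _
    have : y = 0 := by
      rw [← Finsupp.support_eq_empty]
      exact Finset.card_eq_zero.mp (Nat.le_zero.mp hcard)
    exact this ▸ ⟨0, map_zero _⟩
  | succ n ih =>
    classical
    intro y hcard hinv hfixv
    by_cases hy : y = 0
    · exact hy ▸ ⟨0, map_zero _⟩
    obtain ⟨f, hf⟩ := Finsupp.support_nonempty_iff.mpr hy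
    have hyf : y f ≠ 0 := Finsupp.mem_support_iff.mp hf
    have hfix : sE p ι f ≠ f := fun h => hyf (hfixv f h)
    have h0 : (sE p ι ^ 0) f = f := rfl
    have hu : DP k p ι (Finsupp.single f (y f)) = orb f (fun _ => y f) := by
      rw [DP, LinearMap.sum_apply, orb]
      exact Finset.sum_congr rfl fun i _ => Spow_single i f (y f)
    set z : Wmod k p ι := y - DP k p ι (Finsupp.single f (y f)) with hz
    have hyorb : ∀ i, y ((sE p ι ^ i) f) = y f := fun i => inv_apply_pow hinv i f
    have hzval : ∀ g, z g = y g - orb f (fun _ => y f) g := by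
      intro g
      rw [hz, Finsupp.sub_apply, hu]
    have hzinv : S k p ι z = z := by
      rw [hz, map_sub, hinv, ← LinearMap.comp_apply, S_comp_DP]
    have hzfix : ∀ g, sE p ι g = g → z g = 0 := by
      intro g hg
      rw [hzval, hfixv g hg, orb_apply_fix hfix _ hg, sub_zero]
    have hzsupp : z.support ⊆ y.support.erase f := by
      intro g hg
      rw [Finsupp.mem_support_iff] at hg
      rw [Finset.mem_erase, Finsupp.mem_support_iff]
      constructor
      · intro hgf
        apply hg
        have horbf : orb f (fun _ => y f) f = y f := by
          conv_lhs => rw [← h0]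
          exact orb_apply_mem hp hfix _ hp.pos
        rw [hgf, hzval, horbf, sub_self]
      · intro hyg
        apply hg
        rw [hzval, hyg]
        by_cases hmem : ∃ i, i < p ∧ g = (sE p ι ^ i) f
        · obtain ⟨i, hi, hgi⟩ := hmem
          exfalso
          apply hyf
          rw [← hyorb i, ← hgi, hyg]
        · push_neg at hmem
          rw [orb_apply_notmem _ hmem, sub_zero]
    have hzcard : z.support.card ≤ n := by
      have := Finset.card_le_card hzsupp
      have h2 := Finset.card_erase_of_mem hf
      omega
    obtain ⟨w, hw⟩ := ih z hzcard hzinv hzfix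
    refine ⟨w + Finsupp.single f (y f), ?_⟩
    rw [map_add, hw, hz, sub_add_cancel]

/-- odd key lemma: elements of `ker DP` vanishing at fixed points are in the image of `DM`. -/
lemma KL3 [NeZero p] [CharP k p] (hp : p.Prime) :
    ∀ (n : ℕ) (y : Wmod k p ι), y.support.card ≤ n → DP k p ι y = 0 →
      (∀ g, sE p ι g = g → y g = 0) → y ∈ LinearMap.range (DM k p ι) := by
  intro n
  induction n with
  | zero =>
    intro y hcard _ _
    have : y = 0 := by
      rw [← Finsupp.support_eq_empty]
      exact Finset.card_eq_zero.mp (Nat.le_zero.mp hcard)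
    exact this ▸ ⟨0, map_zero _⟩
  | succ n ih =>
    classical
    intro y hcard hker hfixv
    by_cases hy : y = 0
    · exact hy ▸ ⟨0, map_zero _⟩
    obtain ⟨f, hf⟩ := Finsupp.support_nonempty_iff.mpr hy
    have hyf : y f ≠ 0 := Finsupp.mem_support_iff.mp hf
    have hfix : sE p ι f ≠ f := fun h => hyf (hfixv f h)
    obtain ⟨m, hm⟩ : ∃ m, p = m + 1 := ⟨p - 1, by have := hp.pos; omega⟩
    set cc : ℕ → k := fun j => y ((sE p ι ^ j) f) with hcc
    set dd : ℕ → k := fun i => ∑ j ∈ Finset.range (i+1), cc j with hdd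
    set w : Wmod k p ι := ∑ i ∈ Finset.range p, Finsupp.single ((sE p ι ^ i) f) (dd i) with hw
    have hddm : dd m = 0 := by
      simp only [hdd, hcc]
      rw [← hm]
      exact orbit_sum hker f
    have hSw : S k p ι w = ∑ i ∈ Finset.range p, Finsupp.single ((sE p ι ^ (i+1)) f) (dd i) := by
      rw [hw, map_sum]
      refine Finset.sum_congr rfl fun i _ => ?_
      rw [S_single, ← Equiv.Perm.mul_apply, ← pow_succ']
    have h0 : (sE p ι ^ 0) f = f := rfl
    have hrange : Finset.range p = Finset.range (m+1) := by rw [hm]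
    have hDMw : DM k p ι w = orb f cc := by
      have hsw2 : S k p ι w = ∑ i ∈ Finset.range m, Finsupp.single ((sE p ι ^ (i+1)) f) (dd i) := by
        rw [hSw, hrange, Finset.sum_range_succ (fun i => Finsupp.single ((sE p ι ^ (i+1)) f) (dd i)) m,
          hddm, Finsupp.single_zero, add_zero]
      have hw2 : w = ∑ i ∈ Finset.range m, Finsupp.single ((sE p ι ^ (i+1)) f) (dd (i+1))
          + Finsupp.single f (dd 0) := by
        rw [hw, hrange, Finset.sum_range_succ' (fun i => Finsupp.single ((sE p ι ^ i) f) (dd i)) m, h0]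
      have horb : orb f cc = ∑ i ∈ Finset.range m, Finsupp.single ((sE p ι ^ (i+1)) f) (cc (i+1))
          + Finsupp.single f (cc 0) := by
        rw [orb, hrange, Finset.sum_range_succ' (fun i => Finsupp.single ((sE p ι ^ i) f) (cc i)) m, h0]
      have hsplit : ∑ i ∈ Finset.range m, Finsupp.single ((sE p ι ^ (i+1)) f) (dd (i+1))
          = ∑ i ∈ Finset.range m, Finsupp.single ((sE p ι ^ (i+1)) f) (dd i)
            + ∑ i ∈ Finset.range m, Finsupp.single ((sE p ι ^ (i+1)) f) (cc (i+1)) := by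
        rw [← Finset.sum_add_distrib]
        refine Finset.sum_congr rfl fun i _ => ?_
        rw [← Finsupp.single_add]
        congr 1
        simp only [hdd]
        rw [Finset.sum_range_succ]
      have hd0 : dd 0 = cc 0 := by
        simp only [hdd]
        rw [Finset.sum_range_one]
      rw [DM, LinearMap.sub_apply, LinearMap.id_apply, hsw2, hw2, horb, hsplit, hd0]
      abel
    set z : Wmod k p ι := y - orb f cc with hz
    have hDPz : DP k p ι z = 0 := by
      rw [hz, map_sub, hker, ← hDMw, ← LinearMap.comp_apply, DP_comp_DM]
      simp
    have hzfix : ∀ g, sE p ι g = g → z g = 0 := by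
      intro g hg
      rw [hz, Finsupp.sub_apply, hfixv g hg, orb_apply_fix hfix _ hg, sub_zero]
    have hzsupp : z.support ⊆ y.support.erase f := by
      intro g hg
      rw [Finsupp.mem_support_iff] at hg
      rw [Finset.mem_erase, Finsupp.mem_support_iff]
      constructor
      · intro hgf
        apply hg
        have horbf : orb f cc f = cc 0 := by
          conv_lhs => rw [← h0]
          exact orb_apply_mem hp hfix _ hp.pos
        have hcc0 : cc 0 = y f := by simp only [hcc, h0]
        rw [hgf, hz, Finsupp.sub_apply, horbf, hcc0, sub_self]
      · intro hyg
        apply hg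
        rw [hz, Finsupp.sub_apply, hyg]
        by_cases hmem : ∃ i, i < p ∧ g = (sE p ι ^ i) f
        · obtain ⟨i, hi, hgi⟩ := hmem
          have : orb f cc g = cc i := by rw [hgi]; exact orb_apply_mem hp hfix _ hi
          rw [this]
          have : cc i = 0 := by rw [hcc]; simp only; rw [← hgi]; exact hyg
          rw [this, sub_zero]
        · push_neg at hmem
          rw [orb_apply_notmem _ hmem, sub_zero]
    have hzcard : z.support.card ≤ n := by
      have := Finset.card_le_card hzsupp
      have h2 := Finset.card_erase_of_mem hf
      omega
    obtain ⟨w', hw'⟩ := ih z hzcard hDPz hzfix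
    refine ⟨w' + w, ?_⟩
    rw [map_add, hw', hDMw, hz, sub_add_cancel]

end TateAux
end devD

section devE
namespace TateAux

open Finset Finsupp PiTensorProduct
open scoped TensorProduct Classical

variable {k : Type} [Field k] {p : ℕ} {V : Type} [AddCommGroup V] [Module k V]
variable {ι : Type} (bV : Module.Basis ι k V)

/-- The candidate basis family of the tensor power. -/
noncomputable def tb (f : Fin p → ι) : (⨂[k] (_ : Fin p), V) :=
  tprod k fun i => bV (f i)

/-- Coordinate functionals. -/
noncomputable def coordL (f : Fin p → ι) : (⨂[k] (_ : Fin p), V) →ₗ[k] k :=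
  PiTensorProduct.lift ((MultilinearMap.mkPiAlgebra k (Fin p) k).compLinearMap
    (fun i => (Finsupp.lapply (f i)) ∘ₗ (bV.repr : V →ₗ[k] (ι →₀ k))))

lemma coordL_tprod (f : Fin p → ι) (m : Fin p → V) :
    coordL bV f (tprod k m) = ∏ i, bV.repr (m i) (f i) := by
  rw [coordL, PiTensorProduct.lift.tprod, MultilinearMap.compLinearMap_apply,
    MultilinearMap.mkPiAlgebra_apply]
  rfl

lemma coordL_tb (f g : Fin p → ι) :
    coordL bV f (tb bV g) = if f = g then 1 else 0 := by
  classical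
  rw [tb, coordL_tprod]
  by_cases h : f = g
  · subst h
    rw [if_pos rfl]
    refine Finset.prod_eq_one fun i _ => ?_
    rw [Module.Basis.repr_self, Finsupp.single_eq_same]
  · rw [if_neg h]
    obtain ⟨i, hi⟩ : ∃ i, f i ≠ g i := by
      by_contra hc
      push_neg at hc
      exact h (funext hc)
    refine Finset.prod_eq_zero (Finset.mem_univ i) ?_
    rw [Module.Basis.repr_self]
    exact Finsupp.single_eq_of_ne' (Ne.symm hi)

lemma tb_li : LinearIndependent k (tb bV (p := p)) := by
  rw [linearIndependent_iff]
  intro l hl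
  ext g
  by_cases hg : g ∈ l.support
  · have := congrArg (coordL bV g) hl
    rw [map_zero, Finsupp.linearCombination_apply, Finsupp.sum, map_sum] at this
    simp only [map_smul, coordL_tb, smul_eq_mul] at this
    rw [Finset.sum_eq_single_of_mem g hg (fun f _ hne => by rw [if_neg (Ne.symm hne), mul_zero]),
      if_pos rfl, mul_one] at this
    simpa using this
  · simpa using Finsupp.notMem_support_iff.mp hg

lemma tprod_expand (m : Fin p → V) :
    tprod k m = ∑ f ∈ Fintype.piFinset (fun i => (bV.repr (m i)).support),
      (∏ i, bV.repr (m i) (f i)) • tb bV f := by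
  classical
  conv_lhs => rw [show m = fun i => ∑ x ∈ (bV.repr (m i)).support, bV.repr (m i) x • bV x by
    funext i
    conv_lhs => rw [← bV.linearCombination_repr (m i)]
    rw [Finsupp.linearCombination_apply, Finsupp.sum]]
  rw [MultilinearMap.map_sum_finset]
  refine Finset.sum_congr rfl fun f _ => ?_
  rw [MultilinearMap.map_smul_univ]
  rfl

lemma tb_span : ⊤ ≤ Submodule.span k (Set.range (tb bV (p := p))) := by
  classical
  intro x _
  induction x using PiTensorProduct.induction_on with
  | smul_tprod c m =>
    rw [tprod_expand bV m]
    exact Submodule.smul_mem _ _ (Submodule.sum_mem _ fun f _ =>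
      Submodule.smul_mem _ _ (Submodule.subset_span ⟨f, rfl⟩))
  | add x y hx hy => exact Submodule.add_mem _ (hx trivial) (hy trivial)

/-- Basis of the tensor power indexed by functions. -/
noncomputable def BT : Module.Basis (Fin p → ι) k (⨂[k] (_ : Fin p), V) :=
  Module.Basis.mk (tb_li bV) (tb_span bV)

lemma BT_apply (f : Fin p → ι) : BT bV f = tb bV f := Module.Basis.mk_apply _ _ _

lemma BT_repr_tb (f : Fin p → ι) : (BT bV).repr (tb bV f) = Finsupp.single f 1 := by
  rw [← BT_apply, Module.Basis.repr_self]

end TateAux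
end devE


noncomputable section

variable (k : Type) [Field k] (p : ℕ) [CharP k p] [PerfectField k]
variable (V : Type) [AddCommGroup V] [Module k V]

set_option linter.unusedSectionVars false

namespace TateAux

open Finset Finsupp PiTensorProduct
open scoped Classical

variable {ι : Type} (bV : Module.Basis ι k V)

lemma sigma_tb (f : Fin p → ι) :
    sigma k p V (tb bV f) = tb bV (sE p ι f) := by
  rw [tb, tb, sigma, LinearEquiv.coe_coe, reindex_tprod]
  congr 1

lemma repr_sigma_apply (x : TPow k p V) :
    (BT bV).repr (sigma k p V x) = S k p ι ((BT bV).repr x) := by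
  have h : ((BT bV).repr.toLinearMap ∘ₗ sigma k p V)
      = (S k p ι ∘ₗ (BT bV).repr.toLinearMap) := by
    apply (BT bV).ext
    intro f
    rw [LinearMap.comp_apply, LinearMap.comp_apply]
    simp only [LinearEquiv.coe_coe]
    rw [BT_apply, sigma_tb, BT_repr_tb, BT_repr_tb, S_single]
  exact congrArg (fun (L : TPow k p V →ₗ[k] Wmod k p ι) => L x) h

lemma repr_sigma_pow_apply (t : ℕ) (x : TPow k p V) :
    (BT bV).repr ((sigma k p V ^ t) x) = ((S k p ι)^t) ((BT bV).repr x) := by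
  induction t generalizing x with
  | zero => simp
  | succ t ih =>
    rw [pow_succ', pow_succ', Module.End.mul_apply, Module.End.mul_apply,
      repr_sigma_apply, ih]

lemma repr_dMinus_apply (x : TPow k p V) :
    (BT bV).repr (dMinus k p V x) = DM k p ι ((BT bV).repr x) := by
  rw [dMinus, DM, LinearMap.sub_apply, LinearMap.sub_apply, map_sub,
    LinearMap.id_apply, LinearMap.id_apply, repr_sigma_apply]

lemma repr_dPlus_apply (x : TPow k p V) :
    (BT bV).repr (dPlus k p V x) = DP k p ι ((BT bV).repr x) := by
  rw [dPlus, DP, LinearMap.sum_apply, LinearMap.sum_apply, map_sum]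
  exact Finset.sum_congr rfl fun i _ => repr_sigma_pow_apply k p V bV i x

lemma mem_range_dPlus_iff (x : TPow k p V) :
    x ∈ LinearMap.range (dPlus k p V) ↔
      (BT bV).repr x ∈ LinearMap.range (DP k p ι) := by
  constructor
  · rintro ⟨y, rfl⟩
    exact ⟨(BT bV).repr y, (repr_dPlus_apply k p V bV y).symm⟩
  · rintro ⟨w, hw⟩
    refine ⟨(BT bV).repr.symm w, ?_⟩
    apply (BT bV).repr.injective
    rw [repr_dPlus_apply, LinearEquiv.apply_symm_apply, hw]

lemma mem_range_dMinus_iff (x : TPow k p V) :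
    x ∈ LinearMap.range (dMinus k p V) ↔
      (BT bV).repr x ∈ LinearMap.range (DM k p ι) := by
  constructor
  · rintro ⟨y, rfl⟩
    exact ⟨(BT bV).repr y, (repr_dMinus_apply k p V bV y).symm⟩
  · rintro ⟨w, hw⟩
    refine ⟨(BT bV).repr.symm w, ?_⟩
    apply (BT bV).repr.injective
    rw [repr_dMinus_apply, LinearEquiv.apply_symm_apply, hw]

/-- coordinates of `phi`. -/
noncomputable def PhiW (a : ι →₀ k) : Wmod k p ι :=
  ∑ f ∈ Fintype.piFinset (fun _ : Fin p => a.support),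
    (∏ i, a (f i)) • Finsupp.single f (1 : k)

lemma repr_phi (v : V) : (BT bV).repr (phi k p V v) = PhiW k p (bV.repr v) := by
  rw [phi, tprod_expand bV (fun _ => v), map_sum, PhiW]
  exact Finset.sum_congr rfl fun f _ => by rw [map_smul, BT_repr_tb]

lemma PhiW_apply (a : ι →₀ k) (g : Fin p → ι) :
    PhiW k p a g = ∏ i, a (g i) := by
  rw [PhiW, Finsupp.finset_sum_apply]
  by_cases hg : g ∈ Fintype.piFinset (fun _ : Fin p => a.support)
  · rw [Finset.sum_eq_single_of_mem g hg (fun f _ hne => by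
      rw [Finsupp.smul_apply, Finsupp.single_eq_of_ne' hne, smul_zero])]
    rw [Finsupp.smul_apply, Finsupp.single_eq_same, smul_eq_mul, mul_one]
  · have h1 : ∀ f ∈ Fintype.piFinset (fun _ : Fin p => a.support),
        ((∏ i, a (f i)) • Finsupp.single f (1:k)) g = 0 := by
      intro f hf
      have : f ≠ g := fun hc => hg (hc ▸ hf)
      rw [Finsupp.smul_apply, Finsupp.single_eq_of_ne' this, smul_zero]
    rw [Finset.sum_congr rfl h1, Finset.sum_const_zero]
    obtain ⟨i, hi⟩ : ∃ i, g i ∉ a.support := by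
      by_contra hc
      push_neg at hc
      exact hg (Fintype.mem_piFinset.mpr hc)
    rw [eq_comm]
    exact Finset.prod_eq_zero (Finset.mem_univ i) (Finsupp.notMem_support_iff.mp hi)

lemma sE_symm_apply (g : Fin p → ι) : (sE p ι).symm g = g ∘ ⇑(finRotate p) := by
  rw [Equiv.symm_apply_eq, sE_apply]
  funext i
  simp only [Function.comp_apply, Equiv.apply_symm_apply]

lemma S_PhiW (a : ι →₀ k) : S k p ι (PhiW k p a) = PhiW k p a := by
  ext g
  rw [S_apply, PhiW_apply, PhiW_apply, sE_symm_apply]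
  exact Equiv.prod_comp (finRotate p) (fun j => a (g j))

lemma PhiW_const (a : ι →₀ k) (t : ι) :
    PhiW k p a (Function.const (Fin p) t) = a t ^ p := by
  rw [PhiW_apply]
  simp [Finset.prod_const]

end TateAux

namespace TateAux

open Finset Finsupp PiTensorProduct
open scoped Classical

variable {ι : Type}

lemma Spow_invariant {z : Wmod k p ι} (h : S k p ι z = z) (t : ℕ) : ((S k p ι)^t) z = z := by
  induction t with
  | zero => rfl
  | succ t ih => rw [pow_succ', Module.End.mul_apply, ih, h]

lemma DP_invariant {z : Wmod k p ι} (h : S k p ι z = z) : DP k p ι z = 0 := by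
  ext g
  rw [DP_apply, Finset.sum_congr rfl (fun i _ => by rw [Spow_invariant k p h i]),
    Finset.sum_const, Finset.card_range, nsmul_eq_mul, CharP.cast_eq_zero k p, zero_mul]
  simp

end TateAux

open TateAux

/-- STATEMENT 9: `φ` lands in `ker d₋ ∩ ker d₊`, is additive and Frobenius-semilinear
modulo `im d₊` (resp. `im d₋`), and induces bijections
`V^{(1)} → ker d₋ / im d₊` and `V^{(1)} → ker d₊ / im d₋`,
i.e. isomorphisms onto the Tate homology of `ℤ/pℤ` acting on `V^{⊗ p}`
in all (even and odd) degrees. -/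
theorem phi_induces_tate_isomorphism (hp : p ≠ 0) :
    -- φ lands in ker d₋ ∩ ker d₊
    (∀ v : V, dMinus k p V (phi k p V v) = 0 ∧ dPlus k p V (phi k p V v) = 0)
    -- semilinearity: φ(λ v) = λ^p φ(v) (exactly, hence also modulo the images)
    ∧ (∀ (c : k) (v : V), phi k p V (c • v) = c ^ p • phi k p V v)
    -- additivity modulo im d₊ and modulo im d₋
    ∧ (∀ v w : V,
        phi k p V (v + w) - phi k p V v - phi k p V w ∈ LinearMap.range (dPlus k p V)
        ∧ phi k p V (v + w) - phi k p V v - phi k p V w ∈ LinearMap.range (dMinus k p V))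
    -- the induced map to the even Tate homology ker d₋ / im d₊ is bijective
    ∧ (∀ v w : V, phi k p V v - phi k p V w ∈ LinearMap.range (dPlus k p V) → v = w)
    ∧ (∀ x ∈ LinearMap.ker (dMinus k p V),
        ∃ v : V, x - phi k p V v ∈ LinearMap.range (dPlus k p V))
    -- the induced map to the odd Tate homology ker d₊ / im d₋ is bijective
    ∧ (∀ v w : V, phi k p V v - phi k p V w ∈ LinearMap.range (dMinus k p V) → v = w)
    ∧ (∀ x ∈ LinearMap.ker (dPlus k p V),
        ∃ v : V, x - phi k p V v ∈ LinearMap.range (dMinus k p V)) := by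
  classical
  haveI : NeZero p := ⟨hp⟩
  have hprime : p.Prime := (CharP.char_is_prime_or_zero k p).resolve_right hp
  haveI : Fact p.Prime := ⟨hprime⟩
  haveI : Nonempty (Fin p) := ⟨⟨0, Nat.pos_of_ne_zero hp⟩⟩
  set bV := Module.Basis.ofVectorSpace k V with hbV
  -- φ is fixed by σ
  have hσφ : ∀ v, sigma k p V (phi k p V v) = phi k p V v := by
    intro v
    rw [phi, sigma, LinearEquiv.coe_coe, reindex_tprod]
  have hσφt : ∀ (t : ℕ) v, ((sigma k p V)^t) (phi k p V v) = phi k p V v := by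
    intro t v
    induction t with
    | zero => rfl
    | succ t ih => rw [pow_succ', Module.End.mul_apply, ih, hσφ]
  -- p-th roots
  have hro : ∀ c : k, ((frobeniusEquiv k p).symm c)^p = c := by
    intro c
    have h1 : frobenius k p ((frobeniusEquiv k p).symm c) = c := by
      rw [← frobeniusEquiv_apply, RingEquiv.apply_symm_apply]
    calc ((frobeniusEquiv k p).symm c)^p
        = frobenius k p ((frobeniusEquiv k p).symm c) := by rw [frobenius_def]
      _ = c := h1
  -- the coefficientwise root of the constant part
  have hconstinj : Function.Injective
      (fun t : ↥(Module.Basis.ofVectorSpaceIndex k V) => Function.const (Fin p) t) :=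
    fun a b h => congrFun h (Classical.arbitrary _)
  set A : Wmod k p ↥(Module.Basis.ofVectorSpaceIndex k V) → (↥(Module.Basis.ofVectorSpaceIndex k V) →₀ k) :=
    fun y => Finsupp.mapRange (fun c => (frobeniusEquiv k p).symm c) (by simp)
      (Finsupp.comapDomain _ y hconstinj.injOn) with hA
  have hAval : ∀ y t, A y t = (frobeniusEquiv k p).symm (y (Function.const (Fin p) t)) := by
    intro y t
    rw [hA]
    simp only [Finsupp.mapRange_apply, Finsupp.comapDomain_apply]
  have hAp : ∀ y t, (A y t)^p = y (Function.const (Fin p) t) := by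
    intro y t
    rw [hAval, hro]
  have hfixconst : ∀ g : Fin p → ↥(Module.Basis.ofVectorSpaceIndex k V),
      sE p _ g = g → ∃ t, g = Function.const (Fin p) t :=
    fun g hg => ⟨g 0, fix_eq_const hg⟩
  refine ⟨?_, ?_, ?_, ?_, ?_, ?_, ?_⟩
  -- 1 : ker
  · intro v
    constructor
    · rw [dMinus, LinearMap.sub_apply, LinearMap.id_apply, hσφ, sub_self]
    · rw [dPlus, LinearMap.sum_apply,
        Finset.sum_congr rfl (fun i _ => hσφt i v), Finset.sum_const, Finset.card_range,
        ← Nat.cast_smul_eq_nsmul k, CharP.cast_eq_zero, zero_smul]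
  -- 2 : semilinearity
  · intro c v
    have h := MultilinearMap.map_smul_univ (PiTensorProduct.tprod k (s := fun _ : Fin p => V))
      (fun _ => c) (fun _ => v)
    rw [phi, phi]
    simpa [Finset.prod_const, Finset.card_univ, Fintype.card_fin] using h
  -- 3 : additivity modulo the images
  · intro v w
    have hy : (BT bV).repr (phi k p V (v + w) - phi k p V v - phi k p V w)
        = PhiW k p (bV.repr v + bV.repr w) - PhiW k p (bV.repr v) - PhiW k p (bV.repr w) := by
      rw [map_sub, map_sub, repr_phi, repr_phi, repr_phi, map_add]
    have hyinv : S k p _ ((BT bV).repr (phi k p V (v + w) - phi k p V v - phi k p V w))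
        = (BT bV).repr (phi k p V (v + w) - phi k p V v - phi k p V w) := by
      rw [hy, map_sub, map_sub, S_PhiW, S_PhiW, S_PhiW]
    have hyfix : ∀ g, sE p _ g = g →
        ((BT bV).repr (phi k p V (v + w) - phi k p V v - phi k p V w)) g = 0 := by
      intro g hg
      obtain ⟨t, rfl⟩ := hfixconst g hg
      rw [hy, Finsupp.sub_apply, Finsupp.sub_apply, PhiW_const, PhiW_const, PhiW_const,
        Finsupp.add_apply, add_pow_char]
      ring
    have hDP := KL1 hprime _ _ le_rfl hyinv hyfix
    exact ⟨(mem_range_dPlus_iff k p V bV _).mpr hDP,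
      (mem_range_dMinus_iff k p V bV _).mpr (range_DP_le hDP)⟩
  -- 4 : injectivity (even)
  · intro v w hvw
    have h0 := (mem_range_dPlus_iff k p V bV _).mp hvw
    obtain ⟨u, hu⟩ := h0
    have hcoord : ∀ t, (bV.repr v t)^p = (bV.repr w t)^p := by
      intro t
      have h1 := congrArg (fun z : Wmod k p _ => z (Function.const (Fin p) t)) hu
      rw [DP_apply_fix (sE_const t), map_sub, Finsupp.sub_apply, repr_phi, repr_phi,
        PhiW_const, PhiW_const] at h1
      exact (sub_eq_zero.mp h1.symm)
    have hrepr : bV.repr v = bV.repr w := by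
      ext t
      have h2 : (bV.repr v t - bV.repr w t)^p = 0 := by
        rw [sub_pow_char, hcoord t, sub_self]
      exact sub_eq_zero.mp (pow_eq_zero_iff hp |>.mp h2)
    exact bV.repr.injective hrepr
  -- 5 : surjectivity (even)
  · intro x hx
    have hDMy : DM k p _ ((BT bV).repr x) = 0 := by
      rw [← repr_dMinus_apply k p V bV x, LinearMap.mem_ker.mp hx, map_zero]
    have hSy : S k p _ ((BT bV).repr x) = (BT bV).repr x := by
      have := hDMy
      rw [DM, LinearMap.sub_apply, LinearMap.id_apply, sub_eq_zero] at this
      exact this.symm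
    refine ⟨bV.repr.symm (A ((BT bV).repr x)), ?_⟩
    rw [mem_range_dPlus_iff k p V bV, map_sub, repr_phi, LinearEquiv.apply_symm_apply]
    have hyinv : S k p _ ((BT bV).repr x - PhiW k p (A ((BT bV).repr x)))
        = (BT bV).repr x - PhiW k p (A ((BT bV).repr x)) := by
      rw [map_sub, S_PhiW, hSy]
    have hyfix : ∀ g, sE p _ g = g →
        ((BT bV).repr x - PhiW k p (A ((BT bV).repr x))) g = 0 := by
      intro g hg
      obtain ⟨t, rfl⟩ := hfixconst g hg
      rw [Finsupp.sub_apply, PhiW_const, hAp, sub_self]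
    exact KL1 hprime _ _ le_rfl hyinv hyfix
  -- 6 : injectivity (odd)
  · intro v w hvw
    have h0 := (mem_range_dMinus_iff k p V bV _).mp hvw
    obtain ⟨u, hu⟩ := h0
    have hcoord : ∀ t, (bV.repr v t)^p = (bV.repr w t)^p := by
      intro t
      have h1 := congrArg (fun z : Wmod k p _ => z (Function.const (Fin p) t)) hu
      rw [DM_apply_fix (sE_const t), map_sub, Finsupp.sub_apply, repr_phi, repr_phi,
        PhiW_const, PhiW_const] at h1
      exact (sub_eq_zero.mp h1.symm)
    have hrepr : bV.repr v = bV.repr w := by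
      ext t
      have h2 : (bV.repr v t - bV.repr w t)^p = 0 := by
        rw [sub_pow_char, hcoord t, sub_self]
      exact sub_eq_zero.mp (pow_eq_zero_iff hp |>.mp h2)
    exact bV.repr.injective hrepr
  -- 7 : surjectivity (odd)
  · intro x hx
    have hDPy : DP k p _ ((BT bV).repr x) = 0 := by
      rw [← repr_dPlus_apply k p V bV x, LinearMap.mem_ker.mp hx, map_zero]
    refine ⟨bV.repr.symm (A ((BT bV).repr x)), ?_⟩
    rw [mem_range_dMinus_iff k p V bV, map_sub, repr_phi, LinearEquiv.apply_symm_apply]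
    have hyker : DP k p _ ((BT bV).repr x - PhiW k p (A ((BT bV).repr x))) = 0 := by
      rw [map_sub, hDPy, DP_invariant k p (S_PhiW k p _), sub_zero]
    have hyfix : ∀ g, sE p _ g = g →
        ((BT bV).repr x - PhiW k p (A ((BT bV).repr x))) g = 0 := by
      intro g hg
      obtain ⟨t, rfl⟩ := hfixconst g hg
      rw [Finsupp.sub_apply, PhiW_const, hAp, sub_self]
    exact KL3 hprime _ _ le_rfl hyker hyfix

end
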